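/- Suppose F is a subequation and H = ∂F. If H = E ∩ (−G̃) for subequations E and G (where G̃ is the Dirichlet dual of G), then E = G = F. That is, the defining pair of a determined equation is unique. -/

import Mathlib

open Topology Pointwise

abbrev SymMat (n : ℕ) : Type := selfAdjoint (Matrix (Fin n) (Fin n) ℝ)

def PSD (n : ℕ) : Set (SymMat n) := {A | (A : Matrix (Fin n) (Fin n) ℝ).PosSemidef}

def dual {n : ℕ} (F : Set (SymMat n)) : Set (SymMat n) := {A | -A ∉ interior F}

open Finset in
lemma psd_small (n : ℕ) (t : ℝ) (ht : 0 < t) (C : Matrix (Fin n) (Fin n) ℝ)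
    (hC : C.IsHermitian) (hsmall : ∀ i j, |C i j| ≤ t / (n + 1)) :
    (t • (1 : Matrix (Fin n) (Fin n) ℝ) + C).PosSemidef := by
  apply Matrix.PosSemidef.of_dotProduct_mulVec_nonneg
  · have h1 : (t • (1 : Matrix (Fin n) (Fin n) ℝ)).IsHermitian := by
      simp [Matrix.IsHermitian]
    exact h1.add hC
  · intro x
    have hx : star x = x := by funext i; simp [star]
    rw [hx, Matrix.add_mulVec, dotProduct_add, Matrix.smul_mulVec,
      Matrix.one_mulVec, dotProduct_smul, smul_eq_mul]
    have h1 : |dotProduct x (C.mulVec x)| ≤ (t / (n+1)) * (∑ i, |x i|)^2 := by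
      calc |∑ i, x i * (C.mulVec x) i| ≤ ∑ i, |x i * (C.mulVec x) i| := Finset.abs_sum_le_sum_abs _ _
        _ ≤ ∑ i, ∑ j, (t/(n+1)) * (|x i| * |x j|) := by
            apply Finset.sum_le_sum
            intro i _
            rw [abs_mul, Matrix.mulVec, dotProduct]
            calc |x i| * |∑ j, C i j * x j| ≤ |x i| * ∑ j, (t/(n+1)) * |x j| := by
                  apply mul_le_mul_of_nonneg_left _ (abs_nonneg _)
                  calc |∑ j, C i j * x j| ≤ ∑ j, |C i j * x j| := Finset.abs_sum_le_sum_abs _ _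
                    _ ≤ ∑ j, (t/(n+1)) * |x j| := by
                        apply Finset.sum_le_sum
                        intro j _
                        rw [abs_mul]
                        exact mul_le_mul_of_nonneg_right (hsmall i j) (abs_nonneg _)
              _ = ∑ j, (t/(n+1)) * (|x i| * |x j|) := by
                  rw [Finset.mul_sum]
                  exact Finset.sum_congr rfl fun j _ => by ring
        _ = (t/(n+1)) * ∑ i, ∑ j, |x i| * |x j| := by
            rw [Finset.mul_sum]
            exact Finset.sum_congr rfl fun i _ => by rw [Finset.mul_sum]
        _ = (t/(n+1)) * (∑ i, |x i|)^2 := by rw [sq, Finset.sum_mul_sum]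
    have h2 : (∑ i, |x i|)^2 ≤ n * ∑ i, (x i)^2 := by
      have := sq_sum_le_card_mul_sum_sq (s := Finset.univ) (f := fun i : Fin n => |x i|)
      simpa [sq_abs] using this
    have h3 : dotProduct x x = ∑ i, (x i)^2 := by
      simp [dotProduct, sq]
    have h4 : (0:ℝ) ≤ ∑ i, (x i)^2 := Finset.sum_nonneg fun i _ => sq_nonneg _
    have h5 : -(dotProduct x (C.mulVec x)) ≤ (t/(n+1)) * (n * ∑ i, (x i)^2) := by
      have := neg_abs_le (dotProduct x (C.mulVec x))
      nlinarith [div_nonneg ht.le (by positivity : (0:ℝ) ≤ (n:ℝ)+1)]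
    rw [h3]
    have hn : (t/(n+1)) * (n:ℝ) ≤ t := by
      rw [div_mul_eq_mul_div, div_le_iff₀ (by positivity)]
      nlinarith
    nlinarith

noncomputable def smulOne (n : ℕ) (t : ℝ) : SymMat n :=
  ⟨t • 1, by rw [selfAdjoint.mem_iff]; simp [Matrix.star_eq_conjTranspose]⟩

noncomputable def lineA {n : ℕ} (A : SymMat n) (t : ℝ) : SymMat n := A + smulOne n t

lemma lineA_val {n : ℕ} (A : SymMat n) (t : ℝ) : (lineA A t).val = A.val + t • 1 := rfl

lemma lineA_zero {n : ℕ} (A : SymMat n) : lineA A 0 = A := by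
  apply Subtype.ext
  simp [lineA, smulOne]

lemma lineA_continuous {n : ℕ} (A : SymMat n) : Continuous (lineA A) := by
  apply Continuous.subtype_mk
  exact continuous_const.add (continuous_id.smul continuous_const)

lemma psd_smul_one {n : ℕ} {t : ℝ} (ht : 0 ≤ t) : smulOne n t ∈ PSD n := by
  apply Matrix.PosSemidef.of_dotProduct_mulVec_nonneg
  · show (t • (1 : Matrix (Fin n) (Fin n) ℝ)).IsHermitian
    simp [Matrix.IsHermitian]
  · intro x
    have hx : star x = x := by funext i; simp [star]
    rw [hx]
    show (0:ℝ) ≤ dotProduct x ((t • (1:Matrix (Fin n) (Fin n) ℝ)).mulVec x)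
    rw [Matrix.smul_mulVec, Matrix.one_mulVec, dotProduct_smul, smul_eq_mul]
    have : (0:ℝ) ≤ dotProduct x x := by
      rw [dotProduct]
      exact Finset.sum_nonneg fun i _ => mul_self_nonneg _
    positivity

lemma lineA_mem {n : ℕ} {F : Set (SymMat n)} (hFpos : F + PSD n ⊆ F)
    {A : SymMat n} {s t : ℝ} (hst : s ≤ t) (hs : lineA A s ∈ F) : lineA A t ∈ F := by
  have : lineA A t = lineA A s + smulOne n (t - s) := by
    apply Subtype.ext
    show A.val + t • 1 = (A.val + s • 1) + (t - s) • 1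
    module
  rw [this]
  exact hFpos (Set.add_mem_add hs (psd_smul_one (by linarith)))

lemma cont_entry (n : ℕ) (i j : Fin n) : Continuous (fun B : SymMat n => B.val i j) := by
  have h1 : Continuous (fun B : SymMat n => B.val i) :=
    (continuous_apply i).comp continuous_subtype_val
  exact (continuous_apply j).comp h1

lemma box_open {n : ℕ} (Z : SymMat n) (r : ℝ) :
    IsOpen {B : SymMat n | ∀ i j, |B.val i j - Z.val i j| < r} := by
  have : {B : SymMat n | ∀ i j, |B.val i j - Z.val i j| < r}
      = ⋂ i, ⋂ j, (fun B : SymMat n => B.val i j) ⁻¹' (Metric.ball (Z.val i j) r) := by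
    ext B
    simp [Metric.mem_ball, Real.dist_eq]
  rw [this]
  exact isOpen_iInter_of_finite fun i => isOpen_iInter_of_finite fun j =>
    (Metric.isOpen_ball).preimage (cont_entry n i j)

lemma lineA_mem_interior {n : ℕ} {F : Set (SymMat n)} (hFpos : F + PSD n ⊆ F)
    {A : SymMat n} (hA : A ∈ F) {t : ℝ} (ht : 0 < t) : lineA A t ∈ interior F := by
  rw [mem_interior]
  refine ⟨{B : SymMat n | ∀ i j, |B.val i j - (lineA A t).val i j| < t/(n+1)}, ?_, box_open _ _, ?_⟩
  · intro B hB
    have hC : (B.val - (lineA A t).val).IsHermitian := by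
      have h1 := B.2; have h2 := (lineA A t).2
      rw [selfAdjoint.mem_iff] at h1 h2
      exact Matrix.IsHermitian.sub h1 h2
    have hpsd : (t • (1 : Matrix (Fin n) (Fin n) ℝ) + (B.val - (lineA A t).val)).PosSemidef := by
      apply psd_small n t ht _ hC
      intro i j
      exact le_of_lt (by simpa using hB i j)
    have hBeq : B = A + ⟨t • 1 + (B.val - (lineA A t).val), by
        rw [selfAdjoint.mem_iff]; exact hpsd.1⟩ := by
      apply Subtype.ext
      show B.val = A.val + (t • 1 + (B.val - (A.val + t • 1)))
      abel
    rw [hBeq]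
    exact hFpos (Set.add_mem_add hA hpsd)
  · intro i j
    simp [div_pos ht (by positivity : (0:ℝ) < (n:ℝ)+1)]

lemma exists_big (n : ℕ) (D : Matrix (Fin n) (Fin n) ℝ) :
    ∃ t : ℝ, 0 < t ∧ ∀ i j, |D i j| ≤ t / (n+1) := by
  refine ⟨(n+1) * ((∑ i, ∑ j, |D i j|) + 1), by positivity, fun i j => ?_⟩
  rw [mul_div_cancel_left₀ _ (by positivity : ((n:ℝ)+1) ≠ 0)]
  have h1 : |D i j| ≤ ∑ j', |D i j'| :=
    Finset.single_le_sum (f := fun j' => |D i j'|) (fun j' _ => abs_nonneg _) (Finset.mem_univ j)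
  have h2 : (∑ j', |D i j'|) ≤ ∑ i', ∑ j', |D i' j'| :=
    Finset.single_le_sum (f := fun i' => ∑ j', |D i' j'|)
      (fun i' _ => Finset.sum_nonneg fun j' _ => abs_nonneg _) (Finset.mem_univ i)
  linarith

lemma herm_sub {n : ℕ} (A B : SymMat n) : (A.val - B.val).IsHermitian := by
  have h1 := A.2; have h2 := B.2
  rw [selfAdjoint.mem_iff] at h1 h2
  exact Matrix.IsHermitian.sub h1 h2

lemma sInf_not_interior {n : ℕ} {F : Set (SymMat n)} {A : SymMat n}
    (hbdd : BddBelow ((lineA A) ⁻¹' F)) (hnem : ((lineA A) ⁻¹' F).Nonempty) :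
    lineA A (sInf ((lineA A) ⁻¹' F)) ∉ interior F := by
  intro hint
  have hnh : (lineA A) ⁻¹' (interior F) ∈ 𝓝 (sInf ((lineA A) ⁻¹' F)) :=
    (isOpen_interior.preimage (lineA_continuous A)).mem_nhds hint
  obtain ⟨ε, hε, hball⟩ := Metric.mem_nhds_iff.mp hnh
  have hmem : sInf ((lineA A) ⁻¹' F) - ε/2 ∈ (lineA A) ⁻¹' F := by
    apply Set.preimage_mono (interior_subset)
    apply hball
    rw [Metric.mem_ball, Real.dist_eq]
    have : sInf ((lineA A) ⁻¹' F) - ε/2 - sInf ((lineA A) ⁻¹' F) = -(ε/2) := by ring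
    rw [this, abs_neg, abs_of_pos (by linarith)]
    linarith
  have := csInf_le hbdd hmem
  linarith

lemma exists_frontier_above {n : ℕ} {F : Set (SymMat n)} (hFcl : IsClosed F)
    (hFpos : F + PSD n ⊆ F) (hFne : F.Nonempty) {A : SymMat n} (hA : A ∉ F) :
    ∃ t : ℝ, 0 < t ∧ lineA A t ∈ frontier F := by
  set S := (lineA A) ⁻¹' F with hS
  have hScl : IsClosed S := hFcl.preimage (lineA_continuous A)
  have hSne : S.Nonempty := by
    obtain ⟨B, hB⟩ := hFne
    obtain ⟨t, ht, hsmall⟩ := exists_big n (A.val - B.val)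
    refine ⟨t, ?_⟩
    have hpsd := psd_small n t ht _ (herm_sub A B) hsmall
    have heq : lineA A t = B + ⟨t • 1 + (A.val - B.val), by
        rw [selfAdjoint.mem_iff]; exact hpsd.1⟩ := by
      apply Subtype.ext
      show A.val + t • 1 = B.val + (t • 1 + (A.val - B.val))
      abel
    show lineA A t ∈ F
    rw [heq]
    exact hFpos (Set.add_mem_add hB hpsd)
  have hpos : ∀ t ∈ S, 0 < t := by
    intro t htS
    by_contra hle
    push_neg at hle
    exact hA (by rw [← lineA_zero A]; exact lineA_mem hFpos hle htS)
  have hbdd : BddBelow S := ⟨0, fun t htS => (hpos t htS).le⟩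
  have hmem : sInf S ∈ S := hScl.csInf_mem hSne hbdd
  refine ⟨sInf S, hpos _ hmem, ?_⟩
  rw [hFcl.frontier_eq]
  exact ⟨hmem, sInf_not_interior hbdd hSne⟩

lemma exists_frontier_below {n : ℕ} {F : Set (SymMat n)} (hFcl : IsClosed F)
    (hFpos : F + PSD n ⊆ F) (hFproper : F ≠ Set.univ) {A : SymMat n} (hA : A ∈ F) :
    ∃ t : ℝ, t ≤ 0 ∧ lineA A t ∈ frontier F := by
  set S := (lineA A) ⁻¹' F with hS
  have hScl : IsClosed S := hFcl.preimage (lineA_continuous A)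
  have h0S : (0:ℝ) ∈ S := by
    show lineA A 0 ∈ F
    rw [lineA_zero]
    exact hA
  have hbdd : BddBelow S := by
    by_contra hb
    apply hFproper
    apply Set.eq_univ_of_forall
    intro B
    obtain ⟨t₀, ht₀, hsmall⟩ := exists_big n (B.val - A.val)
    obtain ⟨s, hsS, hs⟩ := not_bddBelow_iff.mp hb (-t₀)
    have hts : ∀ i j, |(B.val - A.val) i j| ≤ (-s) / ((n:ℝ)+1) := by
      intro i j
      refine (hsmall i j).trans ?_
      rw [div_le_div_iff₀ (by positivity) (by positivity)]
      nlinarith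
    have hpsd := psd_small n (-s) (by linarith) _ (herm_sub B A) hts
    have heq : B = lineA A s + ⟨(-s) • 1 + (B.val - A.val), by
        rw [selfAdjoint.mem_iff]; exact hpsd.1⟩ := by
      apply Subtype.ext
      show B.val = (A.val + s • 1) + ((-s) • 1 + (B.val - A.val))
      module
    rw [heq]
    exact hFpos (Set.add_mem_add hsS hpsd)
  have hSne : S.Nonempty := ⟨0, h0S⟩
  have hmem : sInf S ∈ S := hScl.csInf_mem hSne hbdd
  refine ⟨sInf S, csInf_le hbdd h0S, ?_⟩
  rw [hFcl.frontier_eq]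
  exact ⟨hmem, sInf_not_interior hbdd hSne⟩

theorem stmt14 (n : ℕ) (F E G : Set (SymMat n))
    (hFcl : IsClosed F) (hFpos : F + PSD n ⊆ F) (hFne : F.Nonempty) (hFproper : F ≠ Set.univ)
    (hEcl : IsClosed E) (hEpos : E + PSD n ⊆ E) (hEne : E.Nonempty) (hEproper : E ≠ Set.univ)
    (hGcl : IsClosed G) (hGpos : G + PSD n ⊆ G) (hGne : G.Nonempty) (hGproper : G ≠ Set.univ)
    (h : frontier F = E ∩ -(dual G)) :
    E = F ∧ G = F := by
  have hmem : ∀ x : SymMat n, x ∈ frontier F ↔ (x ∈ E ∧ x ∉ interior G) := by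
    intro x
    rw [h]
    simp [dual, Set.mem_neg]
  have hGF : G ⊆ F := by
    intro A hA
    by_contra hAF
    obtain ⟨t, ht, htf⟩ := exists_frontier_above hFcl hFpos hFne hAF
    exact ((hmem _).mp htf).2 (lineA_mem_interior hGpos hA ht)
  have hFE : F ⊆ E := by
    intro A hA
    obtain ⟨t, ht, htf⟩ := exists_frontier_below hFcl hFpos hFproper hA
    have hE1 : lineA A t ∈ E := ((hmem _).mp htf).1
    have heq : A = lineA A t + smulOne n (-t) := by
      apply Subtype.ext
      show A.val = (A.val + t • 1) + (-t) • 1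
      module
    rw [heq]
    exact hEpos (Set.add_mem_add hE1 (psd_smul_one (by linarith)))
  have hEF : E ⊆ F := by
    intro A hA
    by_contra hAF
    have hnf : A ∉ frontier F := fun hfr => hAF (hFcl.frontier_eq ▸ hfr).1
    have hint : A ∈ interior G := by
      by_contra hint
      exact hnf ((hmem _).mpr ⟨hA, hint⟩)
    exact hAF (hGF (interior_subset hint))
  have hFG : F ⊆ G := by
    intro A hA
    by_contra hAG
    have hopen : IsOpen ((lineA A) ⁻¹' Gᶜ) := hGcl.isOpen_compl.preimage (lineA_continuous A)
    have h0 : (0:ℝ) ∈ (lineA A) ⁻¹' Gᶜ := by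
      show lineA A 0 ∈ Gᶜ
      rw [lineA_zero]
      exact hAG
    obtain ⟨ε, hε, hball⟩ := Metric.mem_nhds_iff.mp (hopen.mem_nhds h0)
    have hsG : lineA A (ε/2) ∉ G := by
      apply hball
      rw [Metric.mem_ball, Real.dist_eq, sub_zero, abs_of_pos (by linarith)]
      linarith
    have hsF : lineA A (ε/2) ∈ interior F := lineA_mem_interior hFpos hA (by linarith)
    have hsfr : lineA A (ε/2) ∈ frontier F :=
      (hmem _).mpr ⟨hFE (interior_subset hsF), fun hi => hsG (interior_subset hi)⟩
    exact (hFcl.frontier_eq ▸ hsfr).2 hsF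
  exact ⟨Set.Subset.antisymm hEF hFE, Set.Subset.antisymm hGF hFG⟩
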